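/- arXiv:2204.12234 — 11 statements merged into one kernel-verified Lean document; each statement's English description precedes it below -/
import Mathlib

section
/- Every direct summand of a Σ-dual Rickart module is a Σ-dual Rickart module. Precisely: if M is a Σ-dual Rickart R-module and N is a submodule of M admitting a complementary submodule, then N is a Σ-dual Rickart module. -/
universe u v

/-- A module `M` is dual-Rickart if the image of every endomorphism is a direct summand. -/
def IsDualRickart (R : Type u) [Ring R] (M : Type v) [AddCommGroup M] [Module R M] : Prop :=
  ∀ φ : M →ₗ[R] M, ∃ q : Submodule R M, IsCompl (LinearMap.range φ) q

/-- A module `M` is Σ-dual Rickart if every direct sum of copies of `M` is dual-Rickart. -/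
def IsSigmaDualRickart (R : Type u) [Ring R] (M : Type v) [AddCommGroup M] [Module R M] :
    Prop :=
  ∀ Λ : Type v, IsDualRickart R (Λ →₀ M)

lemma compl_comap {R : Type u} {A : Type*} {B : Type*} [Ring R]
    [AddCommGroup A] [Module R A] [AddCommGroup B] [Module R B]
    (f : A →ₗ[R] B) (hf : Function.Injective f) (S : Submodule R A) (q : Submodule R B)
    (hq : IsCompl (S.map f) q) : IsCompl S (q.comap f) := by
  constructor
  · rw [Submodule.disjoint_def]
    intro x hxS hxq
    have : f x ∈ S.map f ⊓ q := ⟨⟨x, hxS, rfl⟩, hxq⟩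
    rw [hq.inf_eq_bot] at this
    have : f x = f 0 := by simpa using this
    exact hf this
  · rw [codisjoint_iff, eq_top_iff]
    intro x _
    have hx : f x ∈ S.map f ⊔ q := by rw [hq.sup_eq_top]; trivial
    obtain ⟨a, ⟨s, hs, rfl⟩, b, hb, hab⟩ := Submodule.mem_sup.mp hx
    have hxs : x - s ∈ q.comap f := by
      simpa [Submodule.mem_comap, map_sub, ← hab] using hb
    have : x = s + (x - s) := by abel
    rw [this]
    exact Submodule.add_mem_sup hs hxs

/-- A direct summand of a Σ-dual Rickart module is Σ-dual Rickart. -/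
theorem stmt1 (R : Type u) [Ring R] (M : Type v) [AddCommGroup M] [Module R M]
    (hM : IsSigmaDualRickart R M) (N N' : Submodule R M) (h : IsCompl N N') :
    IsSigmaDualRickart R N := by
  intro Λ φ
  set f : (Λ →₀ N) →ₗ[R] (Λ →₀ M) := Finsupp.mapRange.linearMap N.subtype with hfdef
  set P : (Λ →₀ M) →ₗ[R] (Λ →₀ N) :=
    Finsupp.mapRange.linearMap (N.projectionOnto N' h) with hPdef
  have hPf : ∀ x : Λ →₀ N, P (f x) = x := by
    intro x
    ext l
    simp [hfdef, hPdef, Finsupp.mapRange.linearMap_apply, Submodule.projectionOnto_apply_left]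
  have hfinj : Function.Injective f := by
    intro x y hxy
    have := congrArg P hxy
    rwa [hPf, hPf] at this
  have hPsurj : Function.Surjective P := fun x => ⟨f x, hPf x⟩
  obtain ⟨q, hq⟩ := hM Λ (f ∘ₗ φ ∘ₗ P)
  have hrange : LinearMap.range (f ∘ₗ φ ∘ₗ P) = (LinearMap.range φ).map f := by
    rw [LinearMap.range_comp, LinearMap.range_comp, LinearMap.range_eq_top.mpr hPsurj,
      Submodule.map_top]
  rw [hrange] at hq
  exact ⟨q.comap f, compl_comap f hfinj _ q hq⟩
end

section
/- If M is a Σ-dual Rickart R-module, then for any index sets Λ₁ and Λ₂, the module M^(Λ₁) is M^(Λ₂)-dual Rickart; that is, for every module homomorphism f : M^(Λ₁) → M^(Λ₂), the image of f is a direct summand of M^(Λ₂). -/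
universe u v

/-- If `M` is Σ-dual Rickart then `M^(Λ₁)` is `M^(Λ₂)`-dual Rickart for all index sets. -/
theorem stmt3 (R : Type u) [Ring R] (M : Type v) [AddCommGroup M] [Module R M]
    (hM : IsSigmaDualRickart R M) (Λ₁ Λ₂ : Type v)
    (f : (Λ₁ →₀ M) →ₗ[R] (Λ₂ →₀ M)) :
    ∃ q : Submodule R (Λ₂ →₀ M), IsCompl (LinearMap.range f) q := by
  set P := ((Λ₁ →₀ M) × (Λ₂ →₀ M))
  let e : ((Λ₁ ⊕ Λ₂) →₀ M) ≃ₗ[R] P := Finsupp.sumFinsuppLEquivProdFinsupp R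
  let inr : (Λ₂ →₀ M) →ₗ[R] P := LinearMap.inr R _ _
  let ψ : P →ₗ[R] P := inr ∘ₗ f ∘ₗ LinearMap.fst R _ _
  let φ : ((Λ₁ ⊕ Λ₂) →₀ M) →ₗ[R] ((Λ₁ ⊕ Λ₂) →₀ M) := (e.symm.toLinearMap ∘ₗ ψ) ∘ₗ e.toLinearMap
  obtain ⟨q', hq'⟩ := hM (Λ₁ ⊕ Λ₂) φ
  -- transfer complement along e
  have hcompl : IsCompl (LinearMap.range ψ) (Submodule.map (e : _ →ₗ[R] P) q') := by
    have hrange : LinearMap.range ψ = Submodule.map (e : _ →ₗ[R] P) (LinearMap.range φ) := by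
      have : ψ = (e.toLinearMap ∘ₗ φ) ∘ₗ e.symm.toLinearMap := by
        ext x <;> simp [φ]
      conv_lhs => rw [this]
      rw [LinearMap.range_comp, LinearEquiv.range, Submodule.map_top, LinearMap.range_comp]
    rw [hrange]
    exact (Submodule.orderIsoMapComap e).isCompl hq'
  set q := Submodule.map (e : _ →ₗ[R] P) q' with hqdef
  have hψrange : LinearMap.range ψ = Submodule.map inr (LinearMap.range f) := by
    rw [show ψ = inr ∘ₗ (f ∘ₗ LinearMap.fst R _ _) from rfl, LinearMap.range_comp,
      LinearMap.range_comp, LinearMap.range_eq_top.2 (Prod.fst_surjective), Submodule.map_top]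
  rw [hψrange] at hcompl
  refine ⟨Submodule.comap inr q, ⟨?_, ?_⟩⟩
  · rw [Submodule.disjoint_def]
    intro x hx hx'
    have h1 : inr x ∈ Submodule.map inr (LinearMap.range f) := ⟨x, hx, rfl⟩
    have h2 : inr x ∈ q := hx'
    have := Submodule.disjoint_def.mp hcompl.disjoint _ h1 h2
    have : (x : Λ₂ →₀ M) = 0 := by
      have h3 := congrArg Prod.snd this
      exact h3
    exact this
  · rw [codisjoint_iff, eq_top_iff]
    intro y _
    have hy : inr y ∈ Submodule.map inr (LinearMap.range f) ⊔ q := by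
      rw [codisjoint_iff.mp hcompl.codisjoint]; trivial
    obtain ⟨a, ha, b, hb, hab⟩ := Submodule.mem_sup.mp hy
    obtain ⟨x, hx, rfl⟩ := ha
    have hbform : b = inr (y - x) := by
      have : b = inr y - inr x := by rw [← hab]; abel
      rw [this]; simp [inr]
    refine Submodule.mem_sup.mpr ⟨x, hx, y - x, ?_, by abel⟩
    show inr (y - x) ∈ q
    rw [← hbform]; exact hb
end

section
/- Let R be a Noetherian ring and M a cohereditary R-module, i.e., every quotient module of M is injective. Then M is a Σ-dual Rickart module. -/
universe u v

section Helpers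

variable {R : Type u} [Ring R]

/-- Injectivity transfers along linear equivalences. -/
theorem injective_of_equiv' {A B : Type v} [AddCommGroup A] [AddCommGroup B]
    [Module R A] [Module R B] (e : A ≃ₗ[R] B) (hA : Module.Injective R A) :
    Module.Injective R B where
  out X Y _ _ _ _ f hf g := by
    obtain ⟨h, hh⟩ := hA.out f hf (e.symm.toLinearMap ∘ₗ g)
    exact ⟨e.toLinearMap ∘ₗ h, fun x => by simp [hh x]⟩

/-- A subsingleton module is injective. -/
theorem injective_of_subsingleton' {A : Type v} [AddCommGroup A] [Module R A]
    [Subsingleton A] : Module.Injective R A where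
  out X Y _ _ _ _ f hf g := ⟨0, fun x => Subsingleton.elim _ _⟩

/-- Products of two injective modules are injective. -/
theorem injective_prod' {A B : Type v} [AddCommGroup A] [AddCommGroup B]
    [Module R A] [Module R B] (hA : Module.Injective R A) (hB : Module.Injective R B) :
    Module.Injective R (A × B) where
  out X Y _ _ _ _ f hf g := by
    obtain ⟨h₁, hh₁⟩ := hA.out f hf ((LinearMap.fst R A B) ∘ₗ g)
    obtain ⟨h₂, hh₂⟩ := hB.out f hf ((LinearMap.snd R A B) ∘ₗ g)
    refine ⟨h₁.prod h₂, fun x => ?_⟩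
    have := hh₁ x; have := hh₂ x
    simp_all [LinearMap.prod_apply, Prod.ext_iff]

/-- If a submodule is injective and the quotient by it is injective, so is the module. -/
theorem injective_of_sub_quot {B : Type v} [AddCommGroup B] [Module R B]
    (A : Submodule R B) (hA : Module.Injective R A) (hQ : Module.Injective R (B ⧸ A)) :
    Module.Injective R B := by
  obtain ⟨ρ, hρ⟩ := hA.out A.subtype (Submodule.injective_subtype A) LinearMap.id
  have hρ' : ∀ a : A, ρ (a : B) = a := fun a => hρ a
  refine injective_of_equiv' (LinearEquiv.ofBijective (ρ.prod A.mkQ) ⟨?_, ?_⟩).symm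
    (injective_prod' hA hQ)
  · rw [← LinearMap.ker_eq_bot, eq_bot_iff]
    intro x hx
    simp only [LinearMap.mem_ker, LinearMap.prod_apply, Function.prod, Prod.mk_eq_zero] at hx
    obtain ⟨h1, h2⟩ := hx
    have hxA : x ∈ A := by simpa [Submodule.Quotient.mk_eq_zero] using h2
    have : ρ x = ⟨x, hxA⟩ := hρ' ⟨x, hxA⟩
    have : (⟨x, hxA⟩ : A) = 0 := by rw [← this, h1]
    simpa using congrArg Subtype.val this
  · rintro ⟨a, c⟩
    obtain ⟨x, rfl⟩ := A.mkQ_surjective c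
    refine ⟨x - (ρ x : B) + (a : B), ?_⟩
    have m1 : A.mkQ (x - (ρ x : B) + (a : B)) = A.mkQ x := by
      rw [map_add, map_sub]
      have e1 : A.mkQ ((ρ x : B)) = 0 := by simp [Submodule.mkQ_apply, Submodule.Quotient.mk_eq_zero]
      have e2 : A.mkQ ((a : B)) = 0 := by simp [Submodule.mkQ_apply, Submodule.Quotient.mk_eq_zero]
      simp only [Submodule.mkQ_apply] at e1 e2 ⊢
      rw [e1, e2]; abel
    have m2 : ρ (x - (ρ x : B) + (a : B)) = a := by
      rw [map_add, map_sub, hρ' (ρ x), hρ' a]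
      simp
    simp [LinearMap.prod_apply, Function.prod, m1, m2]

end Helpers

section Finite

variable {R : Type u} [Ring R] {M : Type v} [AddCommGroup M] [Module R M]

/-- Every quotient of a finite power of a cohereditary module is injective. -/
theorem fin_pow_cohereditary (hcoher : ∀ N : Submodule R M, Module.Injective R (M ⧸ N)) :
    ∀ (n : ℕ) (K : Submodule R (Fin n → M)), Module.Injective R ((Fin n → M) ⧸ K) := by
  intro n
  induction n with
  | zero =>
    intro K
    have : Subsingleton ((Fin 0 → M) ⧸ K) := Quotient.instSubsingletonQuotient _
    exact injective_of_subsingleton'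
  | succ n ih =>
    intro K
    -- extend-by-zero map
    set ext : (Fin n → M) →ₗ[R] (Fin (n + 1) → M) :=
      LinearMap.pi (fun i => Fin.lastCases 0 (fun j => LinearMap.proj j) i) with hext
    set f : (Fin n → M) →ₗ[R] ((Fin (n + 1) → M) ⧸ K) := K.mkQ ∘ₗ ext with hf
    set A := LinearMap.range f with hA
    have hAinj : Module.Injective R A :=
      injective_of_equiv' f.quotKerEquivRange (ih _)
    set g : M →ₗ[R] (((Fin (n + 1) → M) ⧸ K) ⧸ A) :=
      A.mkQ ∘ₗ K.mkQ ∘ₗ LinearMap.single R (fun _ : Fin (n + 1) => M) (Fin.last n) with hg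
    have hgsurj : Function.Surjective g := by
      intro b
      obtain ⟨c, rfl⟩ := A.mkQ_surjective b
      obtain ⟨v, rfl⟩ := K.mkQ_surjective c
      refine ⟨v (Fin.last n), ?_⟩
      have hv : v = ext (fun j => v (Fin.castSucc j)) +
          Pi.single (Fin.last n) (v (Fin.last n)) := by
        funext i
        induction i using Fin.lastCases with
        | last => simp [hext, LinearMap.pi_apply]
        | cast j => simp [hext, LinearMap.pi_apply, Pi.single_eq_of_ne (Fin.castSucc_lt_last j).ne]
      have : A.mkQ (K.mkQ v) =
          A.mkQ (K.mkQ (ext (fun j => v (Fin.castSucc j)))) + g (v (Fin.last n)) := by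
        conv_lhs => rw [hv]
        simp [hg, LinearMap.single, map_add]
        rfl
      rw [this]
      have : A.mkQ (K.mkQ (ext (fun j => v (Fin.castSucc j)))) = 0 := by
        simp only [Submodule.mkQ_apply, Submodule.Quotient.mk_eq_zero]
        exact ⟨fun j => v (Fin.castSucc j), rfl⟩
      rw [this, zero_add]
    have hQinj : Module.Injective R (((Fin (n + 1) → M) ⧸ K) ⧸ A) := by
      refine injective_of_equiv'
        (g.quotKerEquivRange ≪≫ₗ LinearEquiv.ofTop _ (LinearMap.range_eq_top.mpr hgsurj))
        (hcoher _)
    exact injective_of_sub_quot A hAinj hQinj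

end Finite

section FG

variable {R : Type u} [Ring R] {M : Type v} [AddCommGroup M] [Module R M]

theorem fg_le_injective (hcoher : ∀ N : Submodule R M, Module.Injective R (M ⧸ N))
    {Λ : Type v} (N : Submodule R (Λ →₀ M)) (G : Submodule R ((Λ →₀ M) ⧸ N)) (hG : G.FG) :
    ∃ S : Submodule R ((Λ →₀ M) ⧸ N), G ≤ S ∧ Module.Injective R S := by
  classical
  obtain ⟨s, rfl⟩ := hG
  choose x hx using N.mkQ_surjective
  set F : Finset Λ := s.biUnion (fun q => (x q).support) with hF
  set T : Submodule R (Λ →₀ M) := Finsupp.supported M R (↑F : Set Λ) with hT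
  refine ⟨T.map N.mkQ, ?_, ?_⟩
  · rw [Submodule.span_le]
    intro q hq
    refine ⟨x q, ?_, hx q⟩
    show x q ∈ T
    rw [hT, Finsupp.mem_supported]
    intro a ha
    have : a ∈ F := Finset.mem_biUnion.mpr ⟨q, hq, ha⟩
    exact this
  · set ψ : T →ₗ[R] ((Λ →₀ M) ⧸ N) := N.mkQ ∘ₗ T.subtype with hψ
    have hrange : LinearMap.range ψ = T.map N.mkQ := by
      rw [hψ, LinearMap.range_comp, Submodule.range_subtype]
    have : Fintype (↑F : Set Λ) := F.finite_toSet.fintype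
    set e1 : T ≃ₗ[R] (Fin (Fintype.card (↑F : Set Λ)) → M) :=
      (Finsupp.supportedEquivFinsupp (↑F : Set Λ)) ≪≫ₗ
        (Finsupp.linearEquivFunOnFinite R M _) ≪≫ₗ
        (LinearEquiv.funCongrLeft R M (Fintype.equivFin (↑F : Set Λ)).symm) with he1
    have injT : Module.Injective R (T ⧸ LinearMap.ker ψ) :=
      injective_of_equiv'
        (Submodule.Quotient.equiv (LinearMap.ker ψ) _ e1 rfl).symm
        (fin_pow_cohereditary hcoher _ _)
    exact injective_of_equiv'
      (ψ.quotKerEquivRange ≪≫ₗ LinearEquiv.ofEq _ _ hrange) injT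

end FG

theorem cohereditary_sigma_dual_rickart_aux (R : Type u) [Ring R] [IsNoetherianRing R]
    (M : Type v) [AddCommGroup M] [Module R M]
    (hcoher : ∀ N : Submodule R M, Module.Injective R (M ⧸ N)) :
    ∀ (Λ : Type v) (φ : (Λ →₀ M) →ₗ[R] (Λ →₀ M)),
      ∃ q : Submodule R (Λ →₀ M), IsCompl (LinearMap.range φ) q := by
  intro Λ φ
  classical
  set V := Λ →₀ M with hV
  set N := LinearMap.ker φ with hN
  set e : (V ⧸ N) ≃ₗ[R] LinearMap.range φ := φ.quotKerEquivRange with he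
  set f₀ : V →ₗ.[R] (V ⧸ N) := ⟨LinearMap.range φ, e.symm.toLinearMap⟩ with hf₀
  set s : Set (V →ₗ.[R] (V ⧸ N)) := {f | f₀ ≤ f} with hs
  obtain ⟨m, hf₀m, hm_mem, hm_max⟩ :
      ∃ m, f₀ ≤ m ∧ m ∈ s ∧ ∀ z ∈ s, m ≤ z → z ≤ m := by
    obtain ⟨m, h1, h2⟩ := zorn_le_nonempty₀ s
      (fun c hcs hchain y hyc =>
        ⟨LinearPMap.sSup c hchain.directedOn,
          (hcs hyc).trans (LinearPMap.le_sSup _ hyc),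
          fun z hz => LinearPMap.le_sSup _ hz⟩) f₀ (le_refl f₀)
    exact ⟨m, h1, h2.1, fun z hz hmz => h2.2 hz hmz⟩
  -- the maximal extension is defined everywhere
  have hdom : m.domain = ⊤ := by
    by_contra hne
    obtain ⟨y, hy⟩ : ∃ y, y ∉ m.domain := by
      by_contra h
      push_neg at h
      exact hne (Submodule.eq_top_iff'.mpr h)
    set Ry : Submodule R V := Submodule.span R {y} with hRy
    set W : Submodule R V := m.domain ⊓ Ry with hW
    set ts : R →ₗ[R] V := LinearMap.toSpanSingleton R V y with hts
    have hWmap : W = Submodule.map ts (Submodule.comap ts m.domain) := by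
      ext v
      constructor
      · rintro ⟨hv1, hv2⟩
        obtain ⟨r, rfl⟩ := Submodule.mem_span_singleton.mp hv2
        exact ⟨r, hv1, rfl⟩
      · rintro ⟨r, hr, rfl⟩
        exact ⟨hr, Submodule.smul_mem _ r (Submodule.mem_span_singleton_self y)⟩
    have hWfg : W.FG := by
      rw [hWmap]
      exact (IsNoetherian.noetherian _).map ts
    set h₀ : W →ₗ[R] (V ⧸ N) := m.toFun ∘ₗ Submodule.inclusion inf_le_left with hh₀
    have hRfg : (LinearMap.range h₀).FG := by
      rw [LinearMap.range_eq_map]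
      exact ((Submodule.fg_top W).mpr hWfg).map h₀
    obtain ⟨S, hGS, hSinj⟩ := fg_le_injective hcoher N _ hRfg
    set h₀' : W →ₗ[R] S := h₀.codRestrict S (fun w => hGS (LinearMap.mem_range_self h₀ w))
      with hh₀'
    obtain ⟨k, hk⟩ := hSinj.out (Submodule.inclusion (inf_le_right : W ≤ Ry))
      (Submodule.inclusion_injective _) h₀'
    set g2 : V →ₗ.[R] (V ⧸ N) := ⟨Ry, S.subtype ∘ₗ k⟩ with hg2
    have hagree : ∀ (a : m.domain) (b : g2.domain), (a : V) = (b : V) → m a = g2 b := by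
      intro a b hab
      have hbRy : (a : V) ∈ Ry := hab ▸ b.2
      have hmem : (a : V) ∈ W := ⟨a.2, hbRy⟩
      have h1 : m a = h₀ ⟨(a : V), hmem⟩ := by
        show m.toFun a = m.toFun (Submodule.inclusion inf_le_left ⟨(a : V), hmem⟩)
        congr 1
      have h2 : g2 b = h₀ ⟨(a : V), hmem⟩ := by
        have hb : Submodule.inclusion (inf_le_right : W ≤ Ry) ⟨(a : V), hmem⟩ = b := by
          apply Subtype.ext
          exact hab
        show (S.subtype ∘ₗ k) b = _
        rw [← hb]
        have := hk ⟨(a : V), hmem⟩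
        simp only [LinearMap.coe_comp, Function.comp_apply, Submodule.coe_subtype]
        rw [this]
        rfl
      rw [h1, h2]
    set m' := m.sup g2 hagree with hm'
    have hm'm : m' ≤ m :=
      hm_max m' (hf₀m.trans (m.left_le_sup g2 hagree)) (m.left_le_sup g2 hagree)
    have : y ∈ m.domain := by
      apply hm'm.1
      rw [hm', LinearPMap.domain_sup]
      exact le_sup_right (α := Submodule R V) (Submodule.mem_span_singleton_self y)
    exact hy this
  -- build the projection
  set G : V →ₗ[R] (V ⧸ N) :=
    m.toFun ∘ₗ Submodule.inclusion (hdom.ge) ∘ₗ Submodule.topEquiv.symm.toLinearMap with hG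
  set ρ : V →ₗ[R] LinearMap.range φ := e.toLinearMap ∘ₗ G with hρ
  have hproj : ∀ x : LinearMap.range φ, ρ (x : V) = x := by
    intro x
    have hxm : (x : V) ∈ m.domain := hdom.symm ▸ Submodule.mem_top
    have h1 : G (x : V) = m ⟨(x : V), hxm⟩ := by
      show m.toFun _ = m.toFun _
      congr 1
    have h2 : m ⟨(x : V), hxm⟩ = f₀ x := (hf₀m.2 (x := x) (y := ⟨(x : V), hxm⟩) rfl).symm
    rw [hρ, LinearMap.coe_comp, Function.comp_apply, h1, h2]
    show e (e.symm x) = x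
    exact e.apply_symm_apply x
  exact ⟨LinearMap.ker ρ, LinearMap.isCompl_of_proj hproj⟩

/-- Every cohereditary module over a Noetherian ring is Σ-dual Rickart. -/
theorem stmt4 (R : Type u) [Ring R] [IsNoetherianRing R]
    (M : Type v) [AddCommGroup M] [Module R M]
    (hcoher : ∀ N : Submodule R M, Module.Injective R (M ⧸ N)) :
    IsSigmaDualRickart R M := by
  intro Λ φ
  exact cohereditary_sigma_dual_rickart_aux R M hcoher Λ φ
end

section
/- An R-module M is Σ-dual Rickart if and only if every module in Add(M) is a Σ-dual Rickart module, where Add(M) is the class of modules isomorphic to a direct summand of a direct sum M^(Λ) of copies of M for some index set Λ. -/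
universe u v

/-- `U ∈ Add(M)`: `U` is isomorphic to a direct summand of a direct sum of copies of `M`. -/
def InAdd (R : Type u) [Ring R] (M : Type v) [AddCommGroup M] [Module R M]
    (U : Type v) [AddCommGroup U] [Module R U] : Prop :=
  ∃ (Λ : Type v) (K K' : Submodule R (Λ →₀ M)), IsCompl K K' ∧ Nonempty (U ≃ₗ[R] K)

/-- Retracts of dual-Rickart modules are dual-Rickart. -/
theorem IsDualRickart.of_retract (R : Type u) [Ring R] {N : Type v} [AddCommGroup N]
    [Module R N] {U : Type v} [AddCommGroup U] [Module R U]
    (i : U →ₗ[R] N) (p : N →ₗ[R] U) (hpi : p.comp i = LinearMap.id)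
    (hN : IsDualRickart R N) : IsDualRickart R U := by
  intro φ
  obtain ⟨q, hq⟩ := hN (i.comp (φ.comp p))
  have hpsur : LinearMap.range p = ⊤ := by
    rw [eq_top_iff]
    intro u _
    exact ⟨i u, by simpa using LinearMap.congr_fun hpi u⟩
  have hrange : LinearMap.range (i.comp (φ.comp p)) = (LinearMap.range φ).map i := by
    rw [LinearMap.range_comp, LinearMap.range_comp, hpsur, Submodule.map_top]
  rw [hrange] at hq
  have hpi' : ∀ u, p (i u) = u := fun u => LinearMap.congr_fun hpi u
  have hinj : Function.Injective i := fun a b h => by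
    have := congrArg p h; simpa [hpi'] using this
  refine ⟨q.comap i, ⟨?_, ?_⟩⟩
  · rw [Submodule.disjoint_def]
    intro x hx hx'
    have : i x ∈ (LinearMap.range φ).map i ⊓ q := ⟨⟨x, hx, rfl⟩, hx'⟩
    rw [hq.1.eq_bot] at this
    have : i x = i 0 := by simpa using this
    exact hinj this
  · rw [codisjoint_iff, eq_top_iff]
    intro u _
    have : i u ∈ (LinearMap.range φ).map i ⊔ q := by
      rw [hq.2.eq_top]; trivial
    obtain ⟨a, ha, b, hb, hab⟩ := Submodule.mem_sup.mp this
    obtain ⟨a', ⟨n, rfl⟩, rfl⟩ := ha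
    have hb' : b = i (u - φ n) := by rw [map_sub, ← hab]; abel
    refine Submodule.mem_sup.mpr ⟨φ n, ⟨n, rfl⟩, p b, ?_, ?_⟩
    · show i (p b) ∈ q
      rw [hb', hpi', ← hb']; exact hb
    · rw [hb', hpi']; abel

/-- `M` is Σ-dual Rickart iff every module in `Add(M)` is Σ-dual Rickart. -/
theorem stmt8 (R : Type u) [Ring R] (M : Type v) [AddCommGroup M] [Module R M] :
    IsSigmaDualRickart R M ↔
      ∀ (U : Type v) [AddCommGroup U] [Module R U], InAdd R M U → IsSigmaDualRickart R U := by
  constructor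
  · intro hM U _ _ ⟨Λ, K, K', hKK', ⟨e⟩⟩ Λ'
    -- retract data for U inside Λ →₀ M
    let i₀ : U →ₗ[R] (Λ →₀ M) := K.subtype.comp e.toLinearMap
    let p₀ : (Λ →₀ M) →ₗ[R] U :=
      e.symm.toLinearMap.comp (K.projectionOnto K' hKK')
    have hpi₀ : p₀.comp i₀ = LinearMap.id := by
      ext u
      simp [p₀, i₀, Submodule.projectionOnto_apply_left]
    -- retract data for Λ' →₀ U inside (Λ' × Λ) →₀ M
    let E := Finsupp.finsuppProdLEquiv (α := Λ') (β := Λ) R (M := M)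
    let i : (Λ' →₀ U) →ₗ[R] ((Λ' × Λ) →₀ M) :=
      E.symm.toLinearMap.comp (Finsupp.mapRange.linearMap i₀)
    let p : ((Λ' × Λ) →₀ M) →ₗ[R] (Λ' →₀ U) :=
      (Finsupp.mapRange.linearMap p₀).comp E.toLinearMap
    have hpi : p.comp i = LinearMap.id := by
      apply LinearMap.ext; intro f
      apply Finsupp.ext; intro a
      have h1 := LinearMap.congr_fun hpi₀ (f a)
      simp only [LinearMap.comp_apply, LinearMap.id_apply] at h1 ⊢
      simp [p, i, Finsupp.mapRange_apply, h1]
    exact IsDualRickart.of_retract R i p hpi (hM (Λ' × Λ))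
  · intro h
    refine h M ⟨PUnit, ⊤, ⊥, isCompl_top_bot, ⟨?_⟩⟩
    exact ((Finsupp.LinearEquiv.finsuppUnique R M PUnit).symm.trans
      (Submodule.topEquiv (R := R) (M := PUnit →₀ M)).symm)
end

section
/- Let R be a Noetherian ring. Then every injective R-module is a Σ-dual Rickart module if and only if R is a hereditary ring (i.e., every ideal of R is projective as an R-module). -/
universe u v

section Aux

variable {R : Type u} [Ring R]

lemma injective_of_retract {M N : Type u} [AddCommGroup M] [Module R M] [AddCommGroup N]
    [Module R N] (hM : Module.Injective R M) (i : N →ₗ[R] M) (r : M →ₗ[R] N)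
    (hri : ∀ x, r (i x) = x) : Module.Injective R N := by
  constructor
  intro X Y _ _ _ _ f hf g
  obtain ⟨h, hh⟩ := hM.out f hf (i ∘ₗ g)
  exact ⟨r ∘ₗ h, fun x => by simp [hh x, hri]⟩

lemma injective_of_equiv {M N : Type u} [AddCommGroup M] [Module R M] [AddCommGroup N]
    [Module R N] (hM : Module.Injective R M) (e : M ≃ₗ[R] N) : Module.Injective R N :=
  injective_of_retract hM e.symm.toLinearMap e.toLinearMap (by simp)

lemma exists_injective_embedding (M : Type u) [AddCommGroup M] [Module R M] :
    ∃ (Q : Type u) (_ : AddCommGroup Q) (_ : Module R Q) (f : M →ₗ[R] Q),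
      Module.Injective R Q ∧ Function.Injective f := by
  let J : ModuleCat.{u} R := CategoryTheory.Injective.under (ModuleCat.of R M)
  refine ⟨J, inferInstance, inferInstance,
    (CategoryTheory.Injective.ι (ModuleCat.of R M)).hom, ?_, ?_⟩
  · have hJ : CategoryTheory.Injective (ModuleCat.of R (J : Type u)) :=
      CategoryTheory.Injective.injective_under (ModuleCat.of R M)
    exact Module.injective_module_of_injective_object (R := R) (M := J)
  · exact (ModuleCat.mono_iff_injective (CategoryTheory.Injective.ι (ModuleCat.of R M))).mp
      inferInstance

lemma injective_prod {M N : Type u} [AddCommGroup M] [Module R M] [AddCommGroup N] [Module R N]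
    (hM : Module.Injective R M) (hN : Module.Injective R N) : Module.Injective R (M × N) := by
  constructor
  intro X Y _ _ _ _ f hf g
  obtain ⟨h1, hh1⟩ := hM.out f hf ((LinearMap.fst R M N) ∘ₗ g)
  obtain ⟨h2, hh2⟩ := hN.out f hf ((LinearMap.snd R M N) ∘ₗ g)
  refine ⟨h1.prod h2, fun x => ?_⟩
  have e1 := hh1 x
  have e2 := hh2 x
  simp only [LinearMap.comp_apply, LinearMap.fst_apply, LinearMap.snd_apply] at e1 e2
  simp [LinearMap.prod_apply, e1, e2]

lemma injective_of_isCompl {M : Type u} [AddCommGroup M] [Module R M]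
    (hM : Module.Injective R M) {p q : Submodule R M} (h : IsCompl p q) :
    Module.Injective R p :=
  injective_of_retract hM p.subtype (p.linearProjOfIsCompl q h)
    (fun x => Submodule.linearProjOfIsCompl_apply_left h x)

lemma lift_of_surjective {F I W : Type u} [AddCommGroup F] [Module R F] [AddCommGroup I]
    [Module R I] [AddCommGroup W] [Module R W] (p : F →ₗ[R] I) (hp : Function.Surjective p)
    (ψ : F →ₗ[R] W) (hker : LinearMap.ker p ≤ LinearMap.ker ψ) :
    ∃ χ : I →ₗ[R] W, ∀ f, χ (p f) = ψ f := by
  let e := p.quotKerEquivOfSurjective hp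
  refine ⟨(Submodule.liftQ (LinearMap.ker p) ψ hker) ∘ₗ e.symm.toLinearMap, fun f => ?_⟩
  have he : e (Submodule.Quotient.mk f) = p f := by
    simp [e, LinearMap.quotKerEquivOfSurjective, LinearMap.quotKerEquivRange]
  have : e.symm (p f) = Submodule.Quotient.mk f := by
    rw [LinearEquiv.symm_apply_eq, he]
  simp [this]

lemma isDualRickart_of_equiv {M N : Type u} [AddCommGroup M] [Module R M] [AddCommGroup N]
    [Module R N] (h : IsDualRickart R M) (e : M ≃ₗ[R] N) : IsDualRickart R N := by
  intro φ
  obtain ⟨q, hq⟩ := h (e.symm.toLinearMap ∘ₗ φ ∘ₗ e.toLinearMap)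
  refine ⟨q.map (e : M →ₗ[R] N), ?_⟩
  have h1 := (Submodule.orderIsoMapComap e).isCompl hq
  have h2 : (LinearMap.range (e.symm.toLinearMap ∘ₗ φ ∘ₗ e.toLinearMap)).map
      (e : M →ₗ[R] N) = LinearMap.range φ := by
    rw [← LinearMap.range_comp]
    have : (e : M →ₗ[R] N) ∘ₗ (e.symm.toLinearMap ∘ₗ φ ∘ₗ e.toLinearMap) =
        φ ∘ₗ e.toLinearMap := by ext x; simp
    rw [this]
    exact LinearMap.range_comp_of_range_eq_top φ (LinearEquiv.range e)
  have h3 : (Submodule.orderIsoMapComap e) (LinearMap.range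
      (e.symm.toLinearMap ∘ₗ φ ∘ₗ e.toLinearMap)) = LinearMap.range φ := h2
  rwa [h3] at h1

/-- From the Σ-dual-Rickart hypothesis: quotients of injective modules are injective. -/
lemma quot_injective_of_hyp
    (hyp : ∀ (M : Type u) [AddCommGroup M] [Module R M],
      Module.Injective R M → IsSigmaDualRickart R M)
    {E : Type u} [AddCommGroup E] [Module R E] (hE : Module.Injective R E)
    (K : Submodule R E) : Module.Injective R (E ⧸ K) := by
  obtain ⟨Q, iQa, iQm, j, hQ, hj⟩ := exists_injective_embedding (R := R) (E ⧸ K)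
  have hEQ : Module.Injective R (E × Q) := injective_prod hE hQ
  -- dual Rickart for E × Q
  have hdr : IsDualRickart R (E × Q) :=
    isDualRickart_of_equiv (hyp _ hEQ PUnit) (Finsupp.LinearEquiv.finsuppUnique R (E × Q) PUnit)
  let ψ : (E ⧸ K) →ₗ[R] E × Q := (LinearMap.inr R E Q) ∘ₗ j
  have hψ : Function.Injective ψ := by
    intro a b hab
    apply hj
    exact congrArg Prod.snd hab
  let φ : (E × Q) →ₗ[R] E × Q := ψ ∘ₗ K.mkQ ∘ₗ (LinearMap.fst R E Q)
  have hrange : LinearMap.range φ = LinearMap.range ψ := by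
    apply LinearMap.range_comp_of_range_eq_top
    rw [LinearMap.range_eq_top]
    exact (Submodule.mkQ_surjective K).comp (fun x => ⟨(x, 0), rfl⟩)
  obtain ⟨q, hq⟩ := hdr φ
  rw [hrange] at hq
  have hinj : Module.Injective R (LinearMap.range ψ) := injective_of_isCompl hEQ hq
  exact injective_of_equiv hinj (LinearEquiv.ofInjective ψ hψ).symm

/-- Hereditary ⇒ quotients of injectives are injective. -/
lemma quot_injective_of_hereditary (hered : ∀ I : Ideal R, Module.Projective R I)
    {E : Type u} [AddCommGroup E] [Module R E] (hE : Module.Injective R E)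
    (K : Submodule R E) : Module.Injective R (E ⧸ K) := by
  apply Module.Baer.injective
  intro I g
  have : Module.Projective R I := hered I
  obtain ⟨g₁, hg₁⟩ := Module.projective_lifting_property K.mkQ g (Submodule.mkQ_surjective K)
  obtain ⟨G, hG⟩ := hE.out I.subtype (Submodule.injective_subtype I) g₁
  refine ⟨K.mkQ ∘ₗ G, fun x hx => ?_⟩
  have := hG ⟨x, hx⟩
  simp only [Submodule.subtype_apply] at this
  rw [LinearMap.comp_apply, this, ← LinearMap.comp_apply, hg₁]

/-- Over a Noetherian ring, direct sums of copies of an injective module are injective. -/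
lemma finsupp_injective_of_noetherian [IsNoetherianRing R] {M : Type u} [AddCommGroup M]
    [Module R M] (hM : Module.Injective R M) (Λ : Type u) :
    Module.Injective R (Λ →₀ M) := by
  classical
  apply Module.Baer.injective
  intro I g
  obtain ⟨T, hT⟩ := IsNoetherian.noetherian I
  let S : Finset Λ := T.attach.biUnion
    (fun t => (g ⟨t.1, hT ▸ Submodule.subset_span t.2⟩).support)
  have hsupp : ∀ (x : R) (hx : x ∈ I), (g ⟨x, hx⟩).support ⊆ S := by
    intro x hx
    have hx' : x ∈ Submodule.span R (T : Set R) := hT ▸ hx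
    have key : ∀ (y : R) (_ : y ∈ Submodule.span R (T : Set R)),
        ∀ hy : y ∈ I, (g ⟨y, hy⟩).support ⊆ S := by
      intro y hy
      refine Submodule.span_induction (p := fun y _ => ∀ hy : y ∈ I, (g ⟨y, hy⟩).support ⊆ S)
        ?_ ?_ ?_ ?_ hy
      · intro z hz hzI
        exact Finset.subset_biUnion_of_mem
          (fun t => (g ⟨t.1, hT ▸ Submodule.subset_span t.2⟩).support) (Finset.mem_attach T ⟨z, hz⟩)
      · intro h0
        have : (⟨0, h0⟩ : I) = 0 := rfl
        rw [this, map_zero]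
        simp
      · intro a b _ _ ha hb hab
        have haI : a ∈ I := hT ▸ ‹a ∈ Submodule.span R (T : Set R)›
        have hbI : b ∈ I := hT ▸ ‹b ∈ Submodule.span R (T : Set R)›
        have : (⟨a + b, hab⟩ : I) = ⟨a, haI⟩ + ⟨b, hbI⟩ := rfl
        rw [this, map_add]
        exact (Finsupp.support_add).trans (Finset.union_subset (ha haI) (hb hbI))
      · intro r a _ ha hra
        have haI : a ∈ I := hT ▸ ‹a ∈ Submodule.span R (T : Set R)›
        have : (⟨r • a, hra⟩ : I) = r • ⟨a, haI⟩ := rfl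
        rw [this, map_smul]
        exact (Finsupp.support_smul).trans (ha haI)
    exact key x hx' hx
  choose G hG using fun (l : Λ) =>
    hM.out I.subtype (Submodule.injective_subtype I) ((Finsupp.lapply l) ∘ₗ g)
  let m : Λ →₀ M := ∑ l ∈ S, Finsupp.single l (G l 1)
  refine ⟨LinearMap.toSpanSingleton R (Λ →₀ M) m, fun x hx => ?_⟩
  ext l
  have hm : m l = if l ∈ S then G l 1 else 0 := by
    simp only [m, Finsupp.finset_sum_apply, Finsupp.single_apply]
    exact Finset.sum_ite_eq' S l fun x => (G x) 1
  have hGl : G l x = (g ⟨x, hx⟩) l := by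
    have := hG l ⟨x, hx⟩
    simpa using this
  rw [LinearMap.toSpanSingleton_apply, Finsupp.smul_apply, hm]
  by_cases hl : l ∈ S
  · rw [if_pos hl, ← hGl]
    have : G l x = G l (x • (1 : R)) := by rw [smul_eq_mul, mul_one]
    rw [this, map_smul]
  · rw [if_neg hl, smul_zero]
    exact (Finsupp.notMem_support_iff.mp (fun hmem => hl (hsupp x hx hmem))).symm

end Aux

/-- Over a Noetherian ring, every injective module is Σ-dual Rickart iff the ring is
(right) hereditary. -/
theorem stmt9 (R : Type u) [Ring R] [IsNoetherianRing R] :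
    (∀ (M : Type u) [AddCommGroup M] [Module R M],
        Module.Injective R M → IsSigmaDualRickart R M) ↔
      (∀ I : Ideal R, Module.Projective R I) := by
  constructor
  · -- forward: hypothesis ⇒ hereditary
    intro hyp I
    let p : (I →₀ R) →ₗ[R] I := Finsupp.linearCombination R (id : I → I)
    have hp : Function.Surjective p := fun x => ⟨Finsupp.single x 1, by simp [p]⟩
    set K := LinearMap.ker p with hK
    obtain ⟨Q₁, iQa, iQm, κ, hQ₁, hκ⟩ := exists_injective_embedding (R := R) K
    obtain ⟨τ, hτ⟩ := hQ₁.out (X := K) (Y := I →₀ R) K.subtype (Submodule.injective_subtype K) κ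
    set L := LinearMap.range κ with hL
    have hQL : Module.Injective R (Q₁ ⧸ L) := quot_injective_of_hyp hyp hQ₁ L
    have hker1 : LinearMap.ker p ≤ LinearMap.ker (L.mkQ ∘ₗ τ) := by
      intro f hf
      have : τ f = κ ⟨f, hf⟩ := hτ ⟨f, hf⟩
      rw [LinearMap.mem_ker, LinearMap.comp_apply, this]
      exact (Submodule.Quotient.mk_eq_zero L).mpr ⟨⟨f, hf⟩, rfl⟩
    obtain ⟨h, hh⟩ := lift_of_surjective p hp (L.mkQ ∘ₗ τ) hker1
    obtain ⟨H, hH⟩ := hQL.out I.subtype (Submodule.injective_subtype I) h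
    obtain ⟨e0, he0⟩ := Submodule.mkQ_surjective L (H 1)
    let g : I →ₗ[R] Q₁ := (LinearMap.toSpanSingleton R Q₁ e0) ∘ₗ I.subtype
    have hg : ∀ x : I, L.mkQ (g x) = h x := by
      intro x
      have h1 : L.mkQ (g x) = (x : R) • H 1 := by
        simp only [g, LinearMap.comp_apply, LinearMap.toSpanSingleton_apply,
          Submodule.subtype_apply, map_smul, he0]
      have h2 : (x : R) • H 1 = H (x : R) := by
        rw [← map_smul, smul_eq_mul, mul_one]
      rw [h1, h2]
      have := hH x
      simpa using this
    let σ : (I →₀ R) →ₗ[R] Q₁ := τ - g ∘ₗ p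
    have hσ : ∀ f, σ f ∈ L := by
      intro f
      have h0 : L.mkQ (σ f) = 0 := by
        simp only [σ, LinearMap.sub_apply, LinearMap.comp_apply, map_sub, hg (p f)]
        rw [hh f]
        simp
      exact (Submodule.Quotient.mk_eq_zero L).mp h0
    let eκ : K ≃ₗ[R] L := LinearEquiv.ofInjective κ hκ
    let σ' : (I →₀ R) →ₗ[R] K := eκ.symm.toLinearMap ∘ₗ (σ.codRestrict L hσ)
    let t : (I →₀ R) →ₗ[R] (I →₀ R) := LinearMap.id - K.subtype ∘ₗ σ'
    have hpt : ∀ f, p (t f) = p f := by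
      intro f
      have : p ((σ' f : (I →₀ R))) = 0 := (σ' f).2
      simp [t, this]
    have htK : LinearMap.ker p ≤ LinearMap.ker t := by
      intro k hk
      have h1 : σ k = κ ⟨k, hk⟩ := by
        have hp0 : p k = 0 := hk
        have hτk : τ k = κ ⟨k, hk⟩ := by rw [← hτ ⟨k, hk⟩]; rfl
        simp [σ, hp0, hτk]
      have h2 : σ' k = ⟨k, hk⟩ := by
        have he : eκ ⟨k, hk⟩ = σ.codRestrict L hσ k := by
          apply Subtype.ext
          rw [LinearEquiv.ofInjective_apply]
          simp [h1]
        simp [σ', ← he]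
      simp [t, LinearMap.mem_ker, h2]
    obtain ⟨s, hs⟩ := lift_of_surjective p hp t htK
    have hsplit : p.comp s = LinearMap.id := by
      ext x
      obtain ⟨f, rfl⟩ := hp x
      rw [LinearMap.comp_apply, hs f, hpt f, LinearMap.id_apply]
    exact Module.Projective.of_split s p hsplit
  · -- backward: hereditary ⇒ injectives are Σ-dual Rickart
    intro hered M _ _ hM Λ φ
    have hN : Module.Injective R (Λ →₀ M) := finsupp_injective_of_noetherian hM Λ
    have hRan : Module.Injective R (LinearMap.range φ) :=
      injective_of_equiv (quot_injective_of_hereditary hered hN (LinearMap.ker φ))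
        (LinearMap.quotKerEquivRange φ)
    obtain ⟨r, hr⟩ := hRan.out (LinearMap.range φ).subtype (Submodule.injective_subtype _) LinearMap.id
    refine ⟨LinearMap.ker r, ?_, ?_⟩
    · rw [Submodule.disjoint_def]
      intro x hx hxk
      have h1 : r x = 0 := hxk
      have h2 : r x = ⟨x, hx⟩ := by
        have := hr ⟨x, hx⟩
        simpa using this
      have : (⟨x, hx⟩ : LinearMap.range φ) = 0 := by rw [← h2, h1]
      exact congrArg Subtype.val this
    · rw [codisjoint_iff, eq_top_iff]
      intro x _
      rw [Submodule.mem_sup]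
      refine ⟨(r x : Λ →₀ M), (r x).2, x - (r x : Λ →₀ M), ?_, by abel⟩
      rw [LinearMap.mem_ker, map_sub]
      have : r ((r x : Λ →₀ M)) = r x := by
        have := hr (r x)
        simpa using this
      rw [this, sub_self]
end

section
/- Let R be a Noetherian ring and M a quasi-injective R-module (every homomorphism from a submodule of M into M extends to an endomorphism of M). If M is a Σ-Rickart module, then M is a Σ-dual Rickart module. -/
universe u v

/-- A module `M` is Rickart if the kernel of every endomorphism is a direct summand. -/
def IsRickart (R : Type u) [Ring R] (M : Type v) [AddCommGroup M] [Module R M] : Prop :=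
  ∀ φ : M →ₗ[R] M, ∃ q : Submodule R M, IsCompl (LinearMap.ker φ) q

/-- A module `M` is Σ-Rickart if every direct sum of copies of `M` is Rickart. -/
def IsSigmaRickart (R : Type u) [Ring R] (M : Type v) [AddCommGroup M] [Module R M] : Prop :=
  ∀ Λ : Type v, IsRickart R (Λ →₀ M)

/-- `M` is quasi-injective: every homomorphism from a submodule of `M` to `M` extends to
an endomorphism of `M`. -/
def IsQuasiInjective (R : Type u) [Ring R] (M : Type v) [AddCommGroup M] [Module R M] :
    Prop :=
  ∀ (N : Submodule R M) (f : N →ₗ[R] M), ∃ g : M →ₗ[R] M, ∀ x : N, g x = f x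

open CategoryTheory LinearMap

section StepA

variable {R : Type u} [Ring R]

/-- A quasi-injective Rickart module is dual-Rickart. -/
theorem aux_dualRickart {N : Type v} [AddCommGroup N] [Module R N]
    (hqi : IsQuasiInjective R N) (hr : IsRickart R N) : IsDualRickart R N := by
  intro φ
  obtain ⟨Q, hQ⟩ := hr φ
  -- the corestriction of φ to Q is an isomorphism onto the range of φ
  let φQ : Q →ₗ[R] LinearMap.range φ :=
    LinearMap.codRestrict (LinearMap.range φ) (φ ∘ₗ Q.subtype) fun x => ⟨x, rfl⟩
  have hinj : Function.Injective φQ := by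
    intro x y hxy
    have h1 : φ ((x : N) - y) = 0 := by
      have := congrArg Subtype.val hxy
      simp only [φQ, LinearMap.codRestrict_apply, LinearMap.comp_apply,
        Submodule.subtype_apply] at this
      rw [map_sub]; exact sub_eq_zero.mpr this
    have h2 : ((x : N) - y) ∈ LinearMap.ker φ ⊓ Q := ⟨h1, sub_mem x.2 y.2⟩
    rw [disjoint_iff.mp hQ.disjoint] at h2
    exact Subtype.ext (sub_eq_zero.mp h2)
  have hsurj : Function.Surjective φQ := by
    rintro ⟨y, x, rfl⟩
    have hx : x ∈ LinearMap.ker φ ⊔ Q := by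
      rw [codisjoint_iff.mp hQ.codisjoint]; trivial
    obtain ⟨k, hk, q, hq, rfl⟩ := Submodule.mem_sup.mp hx
    refine ⟨⟨q, hq⟩, ?_⟩
    apply Subtype.ext
    simp only [φQ, LinearMap.codRestrict_apply, LinearMap.comp_apply, Submodule.subtype_apply]
    simp [map_add, LinearMap.mem_ker.mp hk]
    rfl
  let e : Q ≃ₗ[R] LinearMap.range φ := LinearEquiv.ofBijective φQ ⟨hinj, hsurj⟩
  obtain ⟨g, hg⟩ := hqi (LinearMap.range φ) (Q.subtype ∘ₗ (e.symm : LinearMap.range φ →ₗ[R] Q))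
  set p : N →ₗ[R] N := φ ∘ₗ g with hp
  have hpran : ∀ x : N, p x ∈ LinearMap.range φ := fun x => ⟨g x, rfl⟩
  have hpid : ∀ y : N, y ∈ LinearMap.range φ → p y = y := by
    intro y hy
    have h1 : g y = ((e.symm ⟨y, hy⟩ : Q) : N) := hg ⟨y, hy⟩
    have h2 : φ ((e.symm ⟨y, hy⟩ : Q) : N) = y :=
      congrArg Subtype.val (e.apply_symm_apply ⟨y, hy⟩)
    show φ (g y) = y
    rw [h1]
    exact h2
  refine ⟨LinearMap.ker p, ?_, ?_⟩
  · rw [Submodule.disjoint_def]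
    intro x hx hker
    rw [← hpid x hx]
    exact LinearMap.mem_ker.mp hker
  · rw [codisjoint_iff, eq_top_iff]
    intro x _
    refine Submodule.mem_sup.mpr ⟨p x, hpran x, x - p x, ?_, by abel⟩
    rw [LinearMap.mem_ker, map_sub, hpid (p x) (hpran x), sub_self]

end StepA

section Baer

variable {R : Type u} [Ring R]

/-- Over a left Noetherian ring, a direct sum of copies of a module satisfying Baer's
criterion again satisfies Baer's criterion. -/
theorem aux_baer_finsupp [IsNoetherianRing R] {Q : Type*} [AddCommGroup Q] [Module R Q]
    (hQ : Module.Baer R Q) (Λ : Type*) : Module.Baer R (Λ →₀ Q) := by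
  classical
  intro I f
  obtain ⟨t, ht⟩ := (IsNoetherian.noetherian I : I.FG)
  set s : Finset Λ := t.attach.sup fun r => (f ⟨r.1, ht ▸ Submodule.subset_span r.2⟩).support
    with hs
  have key : ∀ x ∈ Submodule.span R (t : Set R), ∀ (hx : x ∈ I), ∀ μ, μ ∉ s →
      f ⟨x, hx⟩ μ = 0 := by
    intro x hxs
    induction hxs using Submodule.span_induction with
    | mem y hy =>
      intro hx μ hμ
      have hsub : (f ⟨y, ht ▸ Submodule.subset_span hy⟩).support ⊆ s :=
        Finset.le_sup (f := fun r : {x // x ∈ t} =>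
          (f ⟨r.1, ht ▸ Submodule.subset_span r.2⟩).support) (Finset.mem_attach t ⟨y, hy⟩)
      have : f ⟨y, hx⟩ = f ⟨y, ht ▸ Submodule.subset_span hy⟩ := rfl
      rw [this]
      exact Finsupp.notMem_support_iff.mp fun hc => hμ (hsub hc)
    | zero =>
      intro hx μ hμ
      have : (⟨0, hx⟩ : I) = 0 := Subtype.ext rfl
      rw [this, map_zero]; rfl
    | add a b has hbs iha ihb =>
      intro hab μ hμ
      have ha : a ∈ I := ht ▸ has
      have hb : b ∈ I := ht ▸ hbs
      have : (⟨a + b, hab⟩ : I) = ⟨a, ha⟩ + ⟨b, hb⟩ := Subtype.ext rfl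
      rw [this, map_add, Finsupp.add_apply, iha ha μ hμ, ihb hb μ hμ, add_zero]
    | smul r a has ih =>
      intro hra μ hμ
      have ha : a ∈ I := ht ▸ has
      have : (⟨r • a, hra⟩ : I) = r • ⟨a, ha⟩ := Subtype.ext rfl
      rw [this, map_smul, Finsupp.smul_apply, ih ha μ hμ, smul_zero]
  choose g hg using fun μ : Λ => hQ I ((Finsupp.lapply μ) ∘ₗ f)
  refine ⟨∑ μ ∈ s, (Finsupp.lsingle μ) ∘ₗ (g μ), fun x hx => ?_⟩
  ext ν
  rw [LinearMap.sum_apply, Finsupp.finset_sum_apply]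
  simp only [LinearMap.comp_apply, Finsupp.lsingle_apply, Finsupp.single_apply]
  by_cases hν : ν ∈ s
  · rw [Finset.sum_ite_eq' s ν (fun μ => g μ x), if_pos hν, hg ν x hx]
    rfl
  · rw [Finset.sum_eq_zero, key x (ht.symm ▸ hx) hx ν hν]
    intro μ hμ
    rw [if_neg]
    exact fun h => hν (h ▸ hμ)

end Baer

section FullInv

variable {R : Type u} [Ring R]

/-- If `M` is quasi-injective and `j : M →ₗ E` realizes `E` as an essential extension of `M`,
then the image of `j` is invariant under every endomorphism of `E`. -/
theorem aux_fullinv {M : Type v} [AddCommGroup M] [Module R M] {E : Type*} [AddCommGroup E]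
    [Module R E] (hqi : IsQuasiInjective R M) (j : M →ₗ[R] E) (hj : Function.Injective j)
    (hess : ∀ x : E, x ≠ 0 → ∃ r : R, r • x ∈ LinearMap.range j ∧ r • x ≠ 0)
    (h : E →ₗ[R] E) : ∀ m : M, h (j m) ∈ LinearMap.range j := by
  set D : Submodule R M := Submodule.comap j (Submodule.comap h (LinearMap.range j)) with hD
  set jr : M ≃ₗ[R] LinearMap.range j := LinearEquiv.ofInjective j hj with hjr
  have hjrs : ∀ y : LinearMap.range j, j (jr.symm y) = (y : E) := by
    intro y
    have := congrArg Subtype.val (jr.apply_symm_apply y)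
    simp only [hjr, LinearEquiv.ofInjective_apply] at this
    exact this
  set f₀ : D →ₗ[R] M := (jr.symm : LinearMap.range j →ₗ[R] M) ∘ₗ
    LinearMap.codRestrict (LinearMap.range j) (h ∘ₗ j ∘ₗ D.subtype) (fun d => d.2) with hf₀
  obtain ⟨g₀, hg₀⟩ := hqi D f₀
  have hjf : ∀ d : D, j (g₀ d) = h (j (d : M)) := by
    intro d
    rw [hg₀ d]
    simp only [hf₀, LinearMap.comp_apply, LinearEquiv.coe_coe]
    rw [hjrs]
    rfl
  have key : ∀ m : M, h (j m) = j (g₀ m) := by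
    intro m
    by_contra hne
    obtain ⟨r, hmem, hne0⟩ := hess (h (j m) - j (g₀ m)) (sub_ne_zero.mpr hne)
    have hsmul : r • (h (j m) - j (g₀ m)) = h (j (r • m)) - j (g₀ (r • m)) := by
      rw [map_smul, map_smul, map_smul, map_smul, smul_sub]
    have hDm : r • m ∈ D := by
      have : h (j (r • m)) = r • (h (j m) - j (g₀ m)) + j (g₀ (r • m)) := by
        rw [hsmul]; abel
      simp only [hD, Submodule.mem_comap, this]
      exact Submodule.add_mem _ hmem ⟨g₀ (r • m), rfl⟩
    apply hne0
    rw [hsmul, ← hjf ⟨r • m, hDm⟩, sub_self]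
  exact fun m => (key m) ▸ ⟨g₀ m, rfl⟩

/-- A finitely supported function whose values all lie in the range of `j` is in the range of
`Finsupp.mapRange.linearMap j`. -/
theorem aux_mem_range_mapRange {M : Type*} [AddCommGroup M] [Module R M] {E : Type*}
    [AddCommGroup E] [Module R E] (j : M →ₗ[R] E) {Λ : Type*} (x : Λ →₀ E)
    (hx : ∀ μ, x μ ∈ LinearMap.range j) :
    x ∈ LinearMap.range (Finsupp.mapRange.linearMap (α := Λ) j) := by
  classical
  induction x using Finsupp.induction with
  | zero => exact zero_mem _
  | single_add a b w haw hb ih =>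
    have hba : (Finsupp.single a b + w) a = b := by
      rw [Finsupp.add_apply, Finsupp.single_eq_same, Finsupp.notMem_support_iff.mp haw,
        add_zero]
    obtain ⟨m, hm⟩ := hba ▸ hx a
    have hw : ∀ μ, w μ ∈ LinearMap.range j := by
      intro μ
      by_cases hμ : μ = a
      · rw [hμ, Finsupp.notMem_support_iff.mp haw]; exact zero_mem _
      · have : (Finsupp.single a b + w) μ = w μ := by
          rw [Finsupp.add_apply, Finsupp.single_eq_of_ne hμ, zero_add]
        exact this ▸ hx μ
    refine add_mem ⟨Finsupp.single a m, ?_⟩ (ih hw)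
    rw [Finsupp.mapRange.linearMap_apply, Finsupp.mapRange_single, hm]

end FullInv

section StepB

/-- Over a Noetherian ring, any direct sum of copies of a quasi-injective module is
quasi-injective. -/
theorem aux_qi_finsupp (R : Type u) [Ring R] [IsNoetherianRing R] (M : Type v)
    [AddCommGroup M] [Module R M] (hqi : IsQuasiInjective R M) (Λ : Type v) :
    IsQuasiInjective R (Λ →₀ M) := by
  classical
  -- Embed `M` into an injective module `E₀`.
  letI : EnoughInjectives (ModuleCat.{max u v} R) := ModuleCat.enoughInjectives.{v} R
  set X : ModuleCat.{max u v} R := ModuleCat.of R (ULift.{u} M) with hX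
  set E₀ := Injective.under X with hE₀
  haveI : CategoryTheory.Injective (ModuleCat.of R E₀) := Injective.injective_under X
  have hE₀inj : Module.Injective R E₀ := Module.injective_module_of_injective_object R E₀
  set ι' : M →ₗ[R] E₀ := ((Injective.ι X).hom : X →ₗ[R] E₀) ∘ₗ
    (ULift.moduleEquiv.symm : M ≃ₗ[R] ULift M).toLinearMap with hι'def
  have hι' : Function.Injective ι' := by
    have h1 : Function.Injective (Injective.ι X) := by
      rw [← ModuleCat.mono_iff_injective]; infer_instance
    exact h1.comp (ULift.moduleEquiv.symm.injective)
  set M₀ : Submodule R E₀ := LinearMap.range ι' with hM₀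
  -- Zorn: a maximal essential extension `E'` of `M₀` inside `E₀`.
  set S : Set (Submodule R E₀) :=
    {P | M₀ ≤ P ∧ ∀ x ∈ P, x ≠ 0 → ∃ r : R, r • x ∈ M₀ ∧ r • x ≠ 0} with hSdef
  have hM₀S : M₀ ∈ S := ⟨le_rfl, fun x hx hne => ⟨1, by simpa using hx, by simpa using hne⟩⟩
  obtain ⟨E', hME', hE'max⟩ := zorn_le_nonempty₀ S (fun c hcS hchain y hyc => by
    refine ⟨sSup c, ⟨?_, ?_⟩, fun z hz => le_sSup hz⟩
    · exact le_trans (hcS hyc).1 (le_sSup hyc)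
    · intro x hx hne
      obtain ⟨P, hPc, hxP⟩ := (Submodule.mem_sSup_of_directed ⟨y, hyc⟩
        hchain.directedOn).mp hx
      exact (hcS hPc).2 x hxP hne) M₀ hM₀S
  have hE'S : E' ∈ S := hE'max.1
  -- Zorn: a complement `C` of `E'` inside `E₀`.
  obtain ⟨C, -, hCmax⟩ := zorn_le_nonempty₀ {C : Submodule R E₀ | C ⊓ E' = ⊥}
    (fun c hcS hchain y hyc => by
      refine ⟨sSup c, ?_, fun z hz => le_sSup hz⟩
      show sSup c ⊓ E' = ⊥
      rw [eq_bot_iff]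
      intro x hx
      obtain ⟨P, hPc, hxP⟩ := (Submodule.mem_sSup_of_directed ⟨y, hyc⟩
        hchain.directedOn).mp hx.1
      exact (hcS hPc) ▸ (Submodule.mem_inf.mpr ⟨hxP, hx.2⟩)) ⊥ (by simp)
  have hCE' : C ⊓ E' = ⊥ := hCmax.1
  -- The projection of `E₀` onto `E'`.
  set q : E₀ →ₗ[R] (E₀ ⧸ C) := C.mkQ with hq
  set θ : E' →ₗ[R] (E₀ ⧸ C) := q ∘ₗ E'.subtype with hθ
  have hθinj : Function.Injective θ := by
    intro a b hab
    have : ((a : E₀) - b) ∈ C := by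
      rw [← Submodule.Quotient.eq]
      exact hab
    have h2 : ((a : E₀) - b) ∈ C ⊓ E' := ⟨this, sub_mem a.2 b.2⟩
    rw [hCE'] at h2
    exact Subtype.ext (sub_eq_zero.mp h2)
  obtain ⟨g, hgθ⟩ := hE₀inj.out θ hθinj E'.subtype
  -- The image of `E'` is essential in `E₀ ⧸ C`, by maximality of `C`.
  have ess1 : ∀ z : E₀ ⧸ C, z ≠ 0 → ∃ r : R, r • z ∈ LinearMap.range θ ∧ r • z ≠ 0 := by
    intro z hz
    obtain ⟨x, rfl⟩ := C.mkQ_surjective z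
    have hxC : x ∉ C := fun hc => hz ((Submodule.Quotient.mk_eq_zero C).mpr hc)
    have hne : (C ⊔ Submodule.span R {x}) ⊓ E' ≠ ⊥ := by
      intro hbot
      have hle : C ⊔ Submodule.span R {x} ≤ C :=
        hCmax.2 hbot (le_sup_left : C ≤ C ⊔ Submodule.span R {x})
      exact hxC (hle (Submodule.mem_sup_right (Submodule.mem_span_singleton_self x)))
    obtain ⟨e, he, hene⟩ := Submodule.exists_mem_ne_zero_of_ne_bot hne
    obtain ⟨cc, hcc, yy, hyy, hecy⟩ := Submodule.mem_sup.mp he.1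
    obtain ⟨r, rfl⟩ := Submodule.mem_span_singleton.mp hyy
    refine ⟨r, ⟨⟨e, he.2⟩, ?_⟩, ?_⟩
    · show C.mkQ e = r • C.mkQ x
      rw [← map_smul, Submodule.mkQ_apply, Submodule.mkQ_apply, Submodule.Quotient.eq,
        ← hecy]
      simpa using hcc
    · intro hzero
      have hrxC : r • x ∈ C := by
        rwa [← map_smul, Submodule.mkQ_apply, Submodule.Quotient.mk_eq_zero] at hzero
      apply hene
      have : e ∈ C ⊓ E' := ⟨hecy ▸ add_mem hcc hrxC, he.2⟩
      rw [hCE'] at this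
      exact (Submodule.mem_bot R).mp this
  have hginj : Function.Injective g := by
    rw [← LinearMap.ker_eq_bot]
    rw [eq_bot_iff]
    intro z hz
    by_contra hne
    have hzne : z ≠ 0 := fun hc => hne (hc ▸ (Submodule.mem_bot R).mpr rfl)
    obtain ⟨r, ⟨y, hy⟩, hrz⟩ := ess1 z hzne
    have hyne : (y : E₀) ≠ 0 := by
      intro hc
      apply hrz
      rw [← hy]
      have : y = 0 := Subtype.ext hc
      rw [this, map_zero]
    apply hyne
    have : g (r • z) = 0 := by rw [map_smul, LinearMap.mem_ker.mp hz, smul_zero]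
    rw [← hy, hgθ y] at this
    exact this
  set p : E₀ →ₗ[R] E₀ := g ∘ₗ q with hp
  have hpE' : ∀ y ∈ E', p y = y := by
    intro y hy
    show g (q y) = y
    have : q y = θ ⟨y, hy⟩ := rfl
    rw [this, hgθ]
    rfl
  have hpran : ∀ w : E₀, p w ∈ E' := by
    have hrange : LinearMap.range p ≤ E' := by
      have hRS : LinearMap.range p ∈ S := by
        constructor
        · intro m hm
          have hmE' : m ∈ E' := hME' hm
          exact ⟨m, hpE' m hmE'⟩
        · intro x hx hne
          obtain ⟨w, rfl⟩ := hx
          have hqw : q w ≠ 0 := by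
            intro hc
            apply hne
            show g (q w) = 0
            rw [hc, map_zero]
          obtain ⟨r, ⟨y, hy⟩, hrqw⟩ := ess1 (q w) hqw
          have hrx : r • p w = (y : E₀) := by
            show r • g (q w) = _
            rw [← map_smul, ← hy, hgθ]
            rfl
          have hrxne : r • p w ≠ 0 := by
            rw [hrx]
            intro hc
            apply hrqw
            rw [← hy]
            have : y = 0 := Subtype.ext hc
            rw [this, map_zero]
          obtain ⟨s, hs1, hs2⟩ := hE'S.2 (r • p w) (hrx ▸ y.2) hrxne
          exact ⟨s * r, by rwa [mul_smul], by rwa [mul_smul]⟩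
      exact hE'max.2 hRS (fun m hm => ⟨m, hpE' m hm⟩)
    exact fun w => hrange ⟨w, rfl⟩
  -- `E'` is injective.
  have hE'inj : Module.Injective R E' := by
    constructor
    intro A B _ _ _ _ fab hfab gA
    obtain ⟨H, hH⟩ := hE₀inj.out fab hfab (E'.subtype ∘ₗ gA)
    refine ⟨LinearMap.codRestrict E' p hpran ∘ₗ H, fun a => ?_⟩
    apply Subtype.ext
    show p (H (fab a)) = ((gA a : E') : E₀)
    rw [hH a]
    exact hpE' _ (gA a).2
  -- hence `Λ →₀ E'` is injective (Baer + Noetherian).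
  have hBF : Module.Baer R (Λ →₀ E') := aux_baer_finsupp (Module.Baer.of_injective hE'inj) Λ
  have hIF : Module.Injective R (Λ →₀ E') := hBF.injective
  -- the essential embedding `j : M →ₗ E'`.
  have hME'' : ∀ m : M, ι' m ∈ E' := fun m => hME' ⟨m, rfl⟩
  set j : M →ₗ[R] E' := LinearMap.codRestrict E' ι' hME'' with hj
  have hjinj : Function.Injective j := by
    intro a b hab
    exact hι' (congrArg Subtype.val hab)
  have hjess : ∀ x : E', x ≠ 0 → ∃ r : R, r • x ∈ LinearMap.range j ∧ r • x ≠ 0 := by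
    intro x hx
    have hxv : (x : E₀) ≠ 0 := fun hc => hx (Subtype.ext hc)
    obtain ⟨r, ⟨m, hm⟩, hrne⟩ := hE'S.2 (x : E₀) x.2 hxv
    refine ⟨r, ⟨m, ?_⟩, fun hc => hrne ?_⟩
    · apply Subtype.ext
      show ι' m = r • (x : E₀)
      exact hm
    · have := congrArg Subtype.val hc
      simpa using this
  -- the induced embedding of direct sums.
  set F : (Λ →₀ M) →ₗ[R] (Λ →₀ E') := Finsupp.mapRange.linearMap j with hF
  have hFap : ∀ (y : Λ →₀ M) (μ : Λ), F y μ = j (y μ) := by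
    intro y μ
    rw [hF, Finsupp.mapRange.linearMap_apply, Finsupp.mapRange_apply]
  have hFinj : Function.Injective F := by
    intro a b hab
    ext μ
    apply hjinj
    rw [← hFap, ← hFap, hab]
  -- now prove quasi-injectivity.
  intro N f
  set eN : ULift.{max u v} N ≃ₗ[R] N := ULift.moduleEquiv with heN
  have hNinj : Function.Injective ((F ∘ₗ N.subtype) ∘ₗ (eN : ULift N →ₗ[R] N)) :=
    hFinj.comp (Subtype.val_injective.comp eN.injective)
  obtain ⟨h, hh⟩ := hIF.out ((F ∘ₗ N.subtype) ∘ₗ (eN : ULift N →ₗ[R] N)) hNinj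
    ((F ∘ₗ f) ∘ₗ (eN : ULift N →ₗ[R] N))
  -- `h` preserves the range of `F`.
  have hinv : ∀ y : Λ →₀ M, h (F y) ∈ LinearMap.range F := by
    intro y
    induction y using Finsupp.induction with
    | zero => rw [map_zero, map_zero]; exact zero_mem _
    | single_add a b w haw hb ih =>
      rw [map_add, map_add]
      refine add_mem ?_ ih
      have hsingle : F (Finsupp.single a b) = Finsupp.single a (j b) := by
        rw [hF, Finsupp.mapRange.linearMap_apply, Finsupp.mapRange_single]
      rw [hsingle]
      apply aux_mem_range_mapRange
      intro μ
      have : h (Finsupp.single a (j b)) μ =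
          ((Finsupp.lapply μ) ∘ₗ h ∘ₗ (Finsupp.lsingle a)) (j b) := rfl
      rw [this]
      exact aux_fullinv hqi j hjinj hjess _ b
  set FE : (Λ →₀ M) ≃ₗ[R] LinearMap.range F := LinearEquiv.ofInjective F hFinj with hFE
  have hFEs : ∀ z : LinearMap.range F, F (FE.symm z) = (z : Λ →₀ E') := by
    intro z
    have := congrArg Subtype.val (FE.apply_symm_apply z)
    simp only [hFE, LinearEquiv.ofInjective_apply] at this
    exact this
  refine ⟨(FE.symm : LinearMap.range F →ₗ[R] (Λ →₀ M)) ∘ₗ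
    LinearMap.codRestrict (LinearMap.range F) (h ∘ₗ F) (fun y => hinv y), fun x => ?_⟩
  apply hFinj
  show F (FE.symm ⟨h (F x), hinv x⟩) = F (f x)
  rw [hFEs]
  show h (F (x : Λ →₀ M)) = F (f x)
  have := hh ⟨x⟩
  exact this

end StepB

/-- Over a Noetherian ring, a quasi-injective Σ-Rickart module is Σ-dual Rickart. -/
theorem stmt11 (R : Type u) [Ring R] [IsNoetherianRing R]
    (M : Type v) [AddCommGroup M] [Module R M]
    (hqi : IsQuasiInjective R M) (hM : IsSigmaRickart R M) :
    IsSigmaDualRickart R M := by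
  intro Λ
  exact aux_dualRickart (aux_qi_finsupp R M hqi Λ) (hM Λ)
end

section
/- Let M be an R-module that is Σ-quasi-injective, i.e., for every index set Λ the direct sum M^(Λ) is quasi-injective. If M is a Σ-Rickart module, then M is a Σ-dual Rickart module. -/
universe u v

/-- A Σ-quasi-injective, Σ-Rickart module is Σ-dual Rickart. -/
theorem stmt12 (R : Type u) [Ring R] (M : Type v) [AddCommGroup M] [Module R M]
    (hqi : ∀ Λ : Type v, IsQuasiInjective R (Λ →₀ M)) (hM : IsSigmaRickart R M) :
    IsSigmaDualRickart R M := by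
  intro Λ φ
  obtain ⟨K, hK⟩ := hM Λ φ
  set ψ : K →ₗ[R] (Λ →₀ M) := φ ∘ₗ K.subtype with hψ
  have hinj : Function.Injective ψ := by
    rw [← LinearMap.ker_eq_bot, Submodule.eq_bot_iff]
    rintro ⟨x, hxK⟩ hx
    have hx' : x ∈ LinearMap.ker φ := hx
    have := hK.disjoint.le_bot ⟨hx', hxK⟩
    simpa [Subtype.ext_iff] using this
  have hrange : LinearMap.range ψ = LinearMap.range φ := by
    have h1 : LinearMap.range φ = Submodule.map φ (LinearMap.ker φ ⊔ K) := by
      rw [hK.sup_eq_top, Submodule.map_top]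
    rw [h1, Submodule.map_sup]
    have h2 : Submodule.map φ (LinearMap.ker φ) = ⊥ := by
      rw [Submodule.eq_bot_iff]
      rintro x ⟨y, hy, rfl⟩
      exact hy
    rw [h2, bot_sup_eq]
    ext x
    simp [hψ, LinearMap.mem_range, Submodule.mem_map, SetLike.exists]
  let e : K ≃ₗ[R] LinearMap.range ψ := LinearEquiv.ofInjective ψ hinj
  let c : LinearMap.range φ ≃ₗ[R] LinearMap.range ψ := LinearEquiv.ofEq _ _ hrange.symm
  let f : (LinearMap.range φ) →ₗ[R] (Λ →₀ M) :=
    K.subtype ∘ₗ (e.symm.toLinearMap ∘ₗ c.toLinearMap)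
  obtain ⟨g, hg⟩ := hqi Λ (LinearMap.range φ) f
  have key : ∀ k : K, g (φ k) = (k : Λ →₀ M) := by
    intro k
    have hmem : φ k ∈ LinearMap.range φ := ⟨k, rfl⟩
    have := hg ⟨φ k, hmem⟩
    rw [this]
    have hc : c ⟨φ k, hmem⟩ = e k := by
      apply Subtype.ext
      rfl
    simp only [f, LinearMap.comp_apply, LinearEquiv.coe_coe, hc,
      LinearEquiv.symm_apply_apply, Submodule.coe_subtype]
  -- projection onto range φ
  have hproj : ∀ y : LinearMap.range φ, φ (g y) = (y : Λ →₀ M) := by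
    rintro ⟨y, hy⟩
    rw [← hrange] at hy
    obtain ⟨k, rfl⟩ := hy
    simp only [hψ, LinearMap.comp_apply, Submodule.coe_subtype]
    rw [key k]
  let π : (Λ →₀ M) →ₗ[R] (LinearMap.range φ) :=
    (φ ∘ₗ g).codRestrict (LinearMap.range φ) (fun x => ⟨g x, rfl⟩)
  refine ⟨LinearMap.ker π, LinearMap.isCompl_of_proj ?_⟩
  intro y
  apply Subtype.ext
  exact hproj y
end

section
/- Every projective Σ-dual Rickart module is a Σ-Rickart module. Precisely: if M is a projective R-module that is Σ-dual Rickart, then M is Σ-Rickart. -/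
universe u v

/-- A finitely-supported-function module with projective values is projective. -/
theorem projective_finsupp (R : Type u) [Ring R] (M : Type v) [AddCommGroup M] [Module R M]
    [Module.Projective R M] (Λ : Type*) : Module.Projective R (Λ →₀ M) := by
  obtain ⟨s, hs⟩ := (Module.projective_def (R := R) (P := M)).mp inferInstance
  refine Module.Projective.of_split (M := Λ →₀ (M →₀ R))
    (Finsupp.mapRange.linearMap s)
    (Finsupp.mapRange.linearMap (Finsupp.linearCombination R _root_.id)) ?_
  ext x m
  simp [hs m]

/-- Every projective Σ-dual Rickart module is Σ-Rickart. -/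
theorem stmt14 (R : Type u) [Ring R] (M : Type v) [AddCommGroup M] [Module R M]
    [Module.Projective R M] (hM : IsSigmaDualRickart R M) :
    IsSigmaRickart R M := by
  intro Λ φ
  have hproj : Module.Projective R (Λ →₀ M) := projective_finsupp R M Λ
  obtain ⟨q, hq⟩ := hM Λ φ
  -- the range of φ is a direct summand of a projective module, hence projective
  have hrange : Module.Projective R (LinearMap.range φ) := by
    refine Module.Projective.of_split (LinearMap.range φ).subtype
      ((LinearMap.range φ).projectionOnto q hq) ?_
    ext x
    simp
  -- lift the identity along the surjection onto the range
  obtain ⟨s, hs⟩ := Module.projective_lifting_property φ.rangeRestrict LinearMap.id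
    (LinearMap.surjective_rangeRestrict φ)
  have hsid : ∀ y : LinearMap.range φ, φ.rangeRestrict (s y) = y := fun y ↦ by
    have := congrArg (fun f => f y) hs
    simpa only [LinearMap.comp_apply, LinearMap.id_apply] using this
  have hsinj : Function.Injective s := fun a b hab ↦ by
    rw [← hsid a, ← hsid b, hab]
  -- s ∘ rangeRestrict is a projection onto range s with kernel ker φ
  have hisproj : LinearMap.IsProj (LinearMap.range s) (s ∘ₗ φ.rangeRestrict) := by
    constructor
    · intro x; exact ⟨_, rfl⟩
    · rintro x ⟨y, rfl⟩
      simp [hsid y]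
  have hker : LinearMap.ker (s ∘ₗ φ.rangeRestrict) = LinearMap.ker φ := by
    ext x
    simp only [LinearMap.mem_ker, LinearMap.comp_apply]
    constructor
    · intro h
      have : φ.rangeRestrict x = 0 := hsinj (by simpa using h)
      simpa [LinearMap.rangeRestrict, Subtype.ext_iff] using this
    · intro h
      have : φ.rangeRestrict x = 0 := Subtype.ext (by simpa using h)
      simp [this]
  exact ⟨LinearMap.range s, hker ▸ hisproj.isCompl.symm⟩
end

section
/- Let M be an R-module that is Σ-D3, i.e., for every index set Λ the direct sum M^(Λ) satisfies the D3-condition. If M is a Σ-dual Rickart module, then M is a Σ-Rickart module. -/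
universe u v

/-- `M` satisfies the D3-condition: if `N₁, N₂` are direct summands of `M` with
`N₁ + N₂ = M`, then `N₁ ∩ N₂` is a direct summand of `M`. -/
def D3Cond (R : Type u) [Ring R] (M : Type v) [AddCommGroup M] [Module R M] : Prop :=
  ∀ N₁ N₂ : Submodule R M, (∃ c, IsCompl N₁ c) → (∃ c, IsCompl N₂ c) →
    N₁ ⊔ N₂ = ⊤ → ∃ c, IsCompl (N₁ ⊓ N₂) c

section Aux

variable {R : Type*} [Ring R]

/-- D3 transfers along a linear equivalence. -/
lemma d3Cond_of_equiv {P Q : Type*} [AddCommGroup P] [Module R P] [AddCommGroup Q] [Module R Q]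
    (e : P ≃ₗ[R] Q) (h : D3Cond R P) : D3Cond R Q := by
  intro N₁ N₂ h₁ h₂ hsup
  set f := Submodule.orderIsoMapComap e.symm with hf
  obtain ⟨c, hc⟩ := h (f N₁) (f N₂)
    (h₁.elim fun c hc => ⟨f c, f.isCompl hc⟩) (h₂.elim fun c hc => ⟨f c, f.isCompl hc⟩)
    (by rw [← map_sup, hsup, f.map_top])
  refine ⟨f.symm c, ?_⟩
  have := f.symm.isCompl hc
  rwa [map_inf, f.symm_apply_apply, f.symm_apply_apply] at this

/-- If `A` is dual-Rickart and `A × A` satisfies D3, then `A` is Rickart. -/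
lemma isRickart_of_dualRickart_d3 {A : Type*} [AddCommGroup A] [Module R A]
    (hDR : IsDualRickart R A) (hD3 : D3Cond R (A × A)) : IsRickart R A := by
  intro φ
  obtain ⟨c, hc⟩ := hDR φ
  -- the automorphism θ (x, y) = (x, y + φ x)
  let θ : (A × A) ≃ₗ[R] (A × A) :=
    LinearEquiv.ofLinear
      ((LinearMap.fst R A A).prod (LinearMap.snd R A A + φ ∘ₗ LinearMap.fst R A A))
      ((LinearMap.fst R A A).prod (LinearMap.snd R A A - φ ∘ₗ LinearMap.fst R A A))
      (by ext x <;> simp) (by ext x <;> simp)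
  have hθ : ∀ x : A × A, θ x = (x.1, x.2 + φ x.1) := fun x => rfl
  set N₁ : Submodule R (A × A) := LinearMap.range (LinearMap.inl R A A) with hN₁
  set N₂ : Submodule R (A × A) := Submodule.map (θ : (A × A) →ₗ[R] A × A) ((⊤ : Submodule R A).prod c) with hN₂
  have hmemN₁ : ∀ p : A × A, p ∈ N₁ ↔ p.2 = 0 := by
    intro p
    constructor
    · rintro ⟨a, rfl⟩; rfl
    · intro h; exact ⟨p.1, Prod.ext rfl h.symm⟩
  have hmemN₂ : ∀ p : A × A, p ∈ N₂ ↔ p.2 - φ p.1 ∈ c := by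
    intro p
    constructor
    · rintro ⟨q, ⟨-, hq2⟩, rfl⟩
      rw [LinearEquiv.coe_coe, hθ]; simpa using hq2
    · intro h
      exact ⟨(p.1, p.2 - φ p.1), ⟨Submodule.mem_top, h⟩, by rw [LinearEquiv.coe_coe, hθ]; simp⟩
  have hN₁c : ∃ c', IsCompl N₁ c' := ⟨_, LinearMap.isCompl_range_inl_inr⟩
  have hN₂c : ∃ c', IsCompl N₂ c' := by
    refine ⟨Submodule.map (θ : (A × A) →ₗ[R] A × A) ((⊥ : Submodule R A).prod (LinearMap.range φ)), ?_⟩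
    refine (Submodule.orderIsoMapComap (θ : (A × A) ≃ₗ[R] A × A)).isCompl ?_
    constructor
    · have hcc : c ⊓ LinearMap.range φ = ⊥ := by rw [inf_comm]; exact hc.inf_eq_bot
      rw [disjoint_iff, Submodule.prod_inf_prod, top_inf_eq, hcc, Submodule.prod_bot]
    · rw [codisjoint_iff, Submodule.prod_sup_prod, top_sup_eq, sup_comm c,
        hc.sup_eq_top, Submodule.prod_top]
  have hsup : N₁ ⊔ N₂ = ⊤ := by
    rw [eq_top_iff]
    rintro ⟨x, y⟩ -
    have hy : y ∈ LinearMap.range φ ⊔ c := hc.sup_eq_top ▸ Submodule.mem_top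
    obtain ⟨u, ⟨z, rfl⟩, c₀, hc₀, rfl⟩ := Submodule.mem_sup.mp hy
    have h1 : ((x - z, 0) : A × A) ∈ N₁ := (hmemN₁ _).mpr rfl
    have h2 : ((z, φ z + c₀) : A × A) ∈ N₂ := by
      rw [hmemN₂]
      simpa using hc₀
    have heq : ((x, φ z + c₀) : A × A) = (x - z, 0) + (z, φ z + c₀) := by
      simp [Prod.ext_iff]
    rw [heq]
    exact Submodule.add_mem_sup h1 h2
  have hinf : N₁ ⊓ N₂ = Submodule.map (LinearMap.inl R A A) (LinearMap.ker φ) := by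
    ext ⟨x, y⟩
    simp only [Submodule.mem_inf, hmemN₁, hmemN₂, Submodule.mem_map]
    constructor
    · rintro ⟨rfl, h2⟩
      have hφ : φ x = 0 := by
        have hm : φ x ∈ LinearMap.range φ ⊓ c := ⟨⟨x, rfl⟩, by simpa using neg_mem h2⟩
        rw [hc.inf_eq_bot] at hm
        exact hm
      exact ⟨x, LinearMap.mem_ker.mpr hφ, rfl⟩
    · rintro ⟨k, hk, hkeq⟩
      obtain ⟨rfl, rfl⟩ : k = x ∧ (0 : A) = y := by
        simpa [Prod.ext_iff] using hkeq
      refine ⟨rfl, ?_⟩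
      simp [LinearMap.mem_ker.mp hk, zero_mem]
  obtain ⟨q, hq⟩ := hD3 N₁ N₂ hN₁c hN₂c hsup
  rw [hinf] at hq
  set K : Submodule R (A × A) := Submodule.map (LinearMap.inl R A A) (LinearMap.ker φ) with hK
  have hKN₁ : K ≤ N₁ := by
    rintro p ⟨k, hk, rfl⟩
    exact ⟨k, rfl⟩
  -- pull back to A: complement of ker φ is the part of q lying in N₁
  refine ⟨Submodule.comap (LinearMap.inl R A A) (q ⊓ N₁), ?_⟩
  constructor
  · rw [disjoint_iff, eq_bot_iff]
    rintro x ⟨hx1, hx2, -⟩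
    have hm : (x, (0 : A)) ∈ K ⊓ q := ⟨⟨x, hx1, rfl⟩, hx2⟩
    rw [hq.inf_eq_bot] at hm
    simpa [Prod.ext_iff] using hm
  · rw [codisjoint_iff, eq_top_iff]
    intro x _
    have hx : ((x, (0 : A)) : A × A) ∈ K ⊔ (q ⊓ N₁) := by
      rw [← sup_inf_assoc_of_le q hKN₁]
      exact ⟨by rw [hq.sup_eq_top]; trivial, ⟨x, rfl⟩⟩
    obtain ⟨u, ⟨k, hk, rfl⟩, w, hw, heq⟩ := Submodule.mem_sup.mp hx
    have hwN₁ : w ∈ N₁ := hw.2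
    obtain ⟨w1, rfl⟩ := hwN₁
    refine Submodule.mem_sup.mpr ⟨k, hk, w1, ⟨hw.1, w1, rfl⟩, ?_⟩
    have : ((k + w1, (0 : A)) : A × A) = (x, 0) := by
      rw [← heq]; simp [Prod.ext_iff]
    simpa [Prod.ext_iff] using this

end Aux

/-- A Σ-D3, Σ-dual Rickart module is Σ-Rickart. -/
theorem stmt15 (R : Type u) [Ring R] (M : Type v) [AddCommGroup M] [Module R M]
    (hD3 : ∀ Λ : Type v, D3Cond R (Λ →₀ M)) (hM : IsSigmaDualRickart R M) :
    IsSigmaRickart R M := by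
  intro Λ
  exact isRickart_of_dualRickart_d3 (hM Λ)
    (d3Cond_of_equiv (Finsupp.sumFinsuppLEquivProdFinsupp R) (hD3 (Λ ⊕ Λ)))
end

section
/- If M is a Σ-dual Rickart R-module, then its endomorphism ring S = End_R(M) is semi-hereditary, i.e., every finitely generated one-sided ideal of S is projective as an S-module. -/
universe u v

/-- The endomorphism ring of a Σ-dual Rickart module is (left) semi-hereditary:
every finitely generated one-sided ideal is projective. -/
theorem stmt17 (R : Type u) [Ring R] (M : Type v) [AddCommGroup M] [Module R M]
    (hM : IsSigmaDualRickart R M) :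
    ∀ I : Ideal (Module.End R M), I.FG → Module.Projective (Module.End R M) I := by
  classical
  intro I hI
  obtain ⟨T, hT⟩ := hI
  let Λ : Type v := Option (↥T)
  -- the map M → M^(Λ), m ↦ (φ_t m)_t in the `some` coordinates
  let Φ₀ : M →ₗ[R] (Λ →₀ M) :=
    ∑ t : ↥T, (Finsupp.lsingle (some t : Λ)).comp (t : Module.End R M)
  let Φ : (Λ →₀ M) →ₗ[R] (Λ →₀ M) := Φ₀.comp (Finsupp.lapply (none : Λ))
  obtain ⟨q, hq⟩ := hM Λ Φ
  -- the idempotent projection onto range Φ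
  let e : (Λ →₀ M) →ₗ[R] (Λ →₀ M) :=
    (LinearMap.range Φ).subtype.comp ((LinearMap.range Φ).linearProjOfIsCompl q hq)
  have hmem : ∀ m : M, Φ₀ m ∈ LinearMap.range Φ := by
    intro m
    exact ⟨Finsupp.single none m, by simp [Φ]⟩
  have he : ∀ m : M, e (Φ₀ m) = Φ₀ m := by
    intro m
    have := Submodule.linearProjOfIsCompl_apply_left hq ⟨Φ₀ m, hmem m⟩
    exact congrArg Subtype.val this
  have hK3 : ∀ g g' : (Λ →₀ M) →ₗ[R] M, g.comp Φ₀ = g'.comp Φ₀ → g.comp e = g'.comp e := by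
    intro g g' h
    refine LinearMap.ext fun x => ?_
    have hx : e x ∈ LinearMap.range Φ := by
      simp only [e, LinearMap.comp_apply]; exact ((LinearMap.range Φ).linearProjOfIsCompl q hq x).2
    obtain ⟨z, hz⟩ := hx
    have hz' : e x = Φ₀ (z none) := by
      rw [← hz]; rfl
    simp only [LinearMap.comp_apply, hz']
    exact LinearMap.congr_fun h _
  -- every element of I factors through Φ₀
  have lemA : ∀ f ∈ I, ∃ g : (Λ →₀ M) →ₗ[R] M, g.comp Φ₀ = f := by
    intro f hf
    rw [← hT] at hf
    induction hf using Submodule.span_induction with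
    | mem x hx =>
      refine ⟨Finsupp.lapply (some (⟨x, hx⟩ : ↥T) : Λ), ?_⟩
      ext m
      simp only [Φ₀, LinearMap.coe_sum, LinearMap.comp_apply, Finsupp.lsingle_apply,
        Finsupp.lapply_apply, Finset.sum_apply, Finsupp.finset_sum_apply,
        Finsupp.single_apply]
      rw [Finset.sum_eq_single (⟨x, hx⟩ : ↥T)]
      · simp
      · intro b _ hb
        rw [if_neg fun h => hb (Option.some_injective _ h)]
      · intro h
        exact absurd (Finset.mem_univ _) h
    | zero => exact ⟨0, by ext m; simp⟩
    | add x y _ _ hx hy =>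
      obtain ⟨g1, hg1⟩ := hx
      obtain ⟨g2, hg2⟩ := hy
      exact ⟨g1 + g2, by rw [LinearMap.add_comp, hg1, hg2]⟩
    | smul s x _ hx =>
      obtain ⟨g, hg⟩ := hx
      refine ⟨(s : Module.End R M).comp g, ?_⟩
      rw [LinearMap.comp_assoc, hg]
      rfl
  choose gch hgch using lemA
  -- the splitting maps
  let u : I →ₗ[Module.End R M] (Λ → Module.End R M) :=
    { toFun := fun f l => ((gch f.1 f.2).comp e).comp (Finsupp.lsingle l)
      map_add' := by
        intro f1 f2
        funext l
        have h : (gch (f1.1 + f2.1) (f1 + f2).2).comp e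
            = (gch f1.1 f1.2 + gch f2.1 f2.2).comp e := by
          apply hK3
          rw [LinearMap.add_comp, hgch, hgch, hgch]
        show ((gch (f1.1 + f2.1) (f1 + f2).2).comp e).comp (Finsupp.lsingle l) = _
        rw [h, LinearMap.add_comp, LinearMap.add_comp]
        rfl
      map_smul' := by
        intro s f
        funext l
        have h : (gch (s • f.1) (s • f).2).comp e
            = ((s : Module.End R M).comp (gch f.1 f.2)).comp e := by
          apply hK3
          rw [LinearMap.comp_assoc, hgch, hgch]
          rfl
        show ((gch (s • f.1) (s • f).2).comp e).comp (Finsupp.lsingle l) = _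
        rw [h]
        rfl }
  let v : (Λ → Module.End R M) →ₗ[Module.End R M] I :=
    { toFun := fun c => ⟨∑ t : ↥T, c (some t) * (t : Module.End R M), by
        refine Submodule.sum_mem I fun t _ => Ideal.mul_mem_left I _ ?_
        rw [← hT]
        exact Submodule.subset_span t.2⟩
      map_add' := by
        intro c1 c2
        apply Subtype.ext
        simp [add_mul, Finset.sum_add_distrib]
      map_smul' := by
        intro s c
        apply Subtype.ext
        simp [Finset.mul_sum, mul_assoc] }
  refine Module.Projective.of_split u v ?_
  refine LinearMap.ext fun f => Subtype.ext ?_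
  show ∑ t : ↥T, (((gch f.1 f.2).comp e).comp (Finsupp.lsingle (some t : Λ)))
      * (t : Module.End R M) = f.1
  have key : ∀ m : M, ∑ t : ↥T,
      ((gch f.1 f.2).comp e) (Finsupp.single (some t : Λ) ((t : Module.End R M) m)) = f.1 m := by
    intro m
    rw [← map_sum]
    have hΦ₀ : (∑ t : ↥T, Finsupp.single (some t : Λ) ((t : Module.End R M) m)) = Φ₀ m := by
      simp [Φ₀]
    rw [hΦ₀]
    have : ((gch f.1 f.2).comp e) (Φ₀ m) = (gch f.1 f.2) (Φ₀ m) := by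
      simp [LinearMap.comp_apply, he m]
    rw [this, ← LinearMap.comp_apply, hgch]
  refine LinearMap.ext fun m => ?_
  simpa using key m
end

section
/- If M is a projective Σ-dual Rickart R-module, then its endomorphism ring S = End_R(M) is von Neumann regular; that is, for every f ∈ End_R(M) there exists g ∈ End_R(M) with f ∘ g ∘ f = f. -/
universe u v

/-- The endomorphism ring of a projective Σ-dual Rickart module is von Neumann regular. -/
theorem stmt19 (R : Type u) [Ring R] (M : Type v) [AddCommGroup M] [Module R M]
    [Module.Projective R M] (hM : IsSigmaDualRickart R M) :
    ∀ f : Module.End R M, ∃ g : Module.End R M, f * g * f = f := by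
  intro f
  -- transfer dual Rickart from PUnit →₀ M to M
  let e : (PUnit.{v+1} →₀ M) ≃ₗ[R] M := Finsupp.LinearEquiv.finsuppUnique R M PUnit
  obtain ⟨q, hq⟩ := hM PUnit ((e.symm : M →ₗ[R] (PUnit →₀ M)) ∘ₗ f ∘ₗ (e : (PUnit →₀ M) →ₗ[R] M))
  have hrange : (LinearMap.range ((e.symm : M →ₗ[R] (PUnit →₀ M)) ∘ₗ f ∘ₗ (e : (PUnit →₀ M) →ₗ[R] M))).map (e : (PUnit →₀ M) →ₗ[R] M) = LinearMap.range f := by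
    rw [LinearMap.range_comp, LinearMap.range_comp, e.range, Submodule.map_top]
    ext x
    simp only [Submodule.mem_map, LinearMap.mem_range]
    constructor
    · rintro ⟨y, ⟨z, ⟨w, rfl⟩, rfl⟩, rfl⟩; exact ⟨w, by simp⟩
    · rintro ⟨z, rfl⟩; exact ⟨e.symm (f z), ⟨f z, ⟨z, rfl⟩, rfl⟩, by simp⟩
  have hcompl : IsCompl (LinearMap.range f) (q.map (e : (PUnit →₀ M) →ₗ[R] M)) := by
    rw [← hrange]
    exact (Submodule.orderIsoMapComap e).isCompl hq
  set Q := q.map (e : (PUnit →₀ M) →ₗ[R] M)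
  -- projection onto range f
  let π : M →ₗ[R] LinearMap.range f := (LinearMap.range f).projectionOnto Q hcompl
  -- range f is projective
  have hproj : Module.Projective R (LinearMap.range f) :=
    Module.Projective.of_split (LinearMap.range f).subtype π
      (by ext x; simp [π, Submodule.projectionOnto_apply_left])
  -- lift id along the surjection rangeRestrict f
  obtain ⟨h, hh⟩ := Module.projective_lifting_property f.rangeRestrict LinearMap.id
    f.surjective_rangeRestrict
  refine ⟨h ∘ₗ π, ?_⟩
  ext m
  have h1 : π (f m) = ⟨f m, LinearMap.mem_range_self f m⟩ :=
    Submodule.projectionOnto_apply_left hcompl ⟨f m, LinearMap.mem_range_self f m⟩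
  have h2 : f.rangeRestrict (h ⟨f m, LinearMap.mem_range_self f m⟩) = ⟨f m, LinearMap.mem_range_self f m⟩ := by
    rw [← LinearMap.comp_apply, hh]; rfl
  have h3 : f (h ⟨f m, LinearMap.mem_range_self f m⟩) = f m := congrArg Subtype.val h2
  simp only [Module.End.mul_apply, LinearMap.comp_apply]
  rw [h1, h3]
end
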